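/- For all ℓ, m ∈ ℕ, the number of Motzkin words with exactly ℓ entries 0, m entries −1 and m+1 entries +1 (i.e., Motzkin paths from 0 to +1 with parameters (ℓ, m)) equals Σ_{ℓ₁+ℓ₂ = ℓ} Σ_{m₁+m₂ = m} Exc(ℓ₁, m₁)·Br(ℓ₂, m₂). (This is the coefficient form of the equation B^{(+1)} = E·B.) -/

import Mathlib

/-- A Motzkin word is a list with entries in `{-1, 0, +1} ⊆ ℤ`. -/
def IsMotzkinWord (w : List ℤ) : Prop := ∀ x ∈ w, x = -1 ∨ x = 0 ∨ x = 1

/-- Motzkin bridges with `ℓ` level steps, `m` down steps and `m` up steps. -/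
def MotzkinBridge (l m : ℕ) : Set (List ℤ) :=
  {w | IsMotzkinWord w ∧ w.count 0 = l ∧ w.count (-1) = m ∧ w.count 1 = m}

/-- Motzkin excursions: bridges all of whose prefix sums are nonnegative. -/
def MotzkinExcursion (l m : ℕ) : Set (List ℤ) :=
  {w | w ∈ MotzkinBridge l m ∧ ∀ p : List ℤ, p <+: w → 0 ≤ p.sum}

/-- Motzkin paths from `0` to `+1` with `ℓ` level steps, `m` down steps and `m+1`
up steps. -/
def MotzkinPathUp (l m : ℕ) : Set (List ℤ) :=
  {w | IsMotzkinWord w ∧ w.count 0 = l ∧ w.count (-1) = m ∧ w.count 1 = m + 1}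

/-- The number `Br(ℓ, m)` of Motzkin bridges with parameters `(ℓ, m)`. -/
noncomputable def Br (l m : ℕ) : ℕ := Nat.card (MotzkinBridge l m)

/-- The number `Exc(ℓ, m)` of Motzkin excursions with parameters `(ℓ, m)`. -/
noncomputable def Exc (l m : ℕ) : ℕ := Nat.card (MotzkinExcursion l m)

/-- The number of Motzkin paths from `0` to `+1` with parameters `(ℓ, m)`. -/
noncomputable def BrUp (l m : ℕ) : ℕ := Nat.card (MotzkinPathUp l m)

section Aux

lemma motzkin_sum {w : List ℤ} (hw : IsMotzkinWord w) :
    w.sum = (w.count 1 : ℤ) - (w.count (-1) : ℤ) := by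
  induction w with
  | nil => simp
  | cons a t ih =>
    have ha := hw a (by simp)
    have ht : IsMotzkinWord t := fun x hx => hw x (by simp [hx])
    have iht := ih ht
    rcases ha with h | h | h <;> subst h <;>
      simp [List.count_cons, iht] <;> ring

lemma motzkin_length {w : List ℤ} (hw : IsMotzkinWord w) :
    w.length = w.count 0 + w.count (-1) + w.count 1 := by
  induction w with
  | nil => simp
  | cons a t ih =>
    have ha := hw a (by simp)
    have ht : IsMotzkinWord t := fun x hx => hw x (by simp [hx])
    have iht := ih ht
    rcases ha with h | h | h <;> subst h <;> simp [List.count_cons, iht] <;> omega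

lemma motzkin_finite_aux (n : ℕ) :
    {w : List ℤ | IsMotzkinWord w ∧ w.length = n}.Finite := by
  classical
  have hfin : Finite ({-1, 0, 1} : Set ℤ) :=
    (((Set.finite_singleton (1:ℤ)).insert 0).insert (-1)).to_subtype
  have h1 : {v : List ({-1, 0, 1} : Set ℤ) | v.length = n}.Finite := List.finite_length_eq _ n
  apply (h1.image (List.map Subtype.val)).subset
  rintro w ⟨hw, hlen⟩
  refine ⟨w.attach.map (fun x => ⟨x.1, by rcases hw x.1 x.2 with h | h | h <;> simp [h]⟩),
    by simpa, ?_⟩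
  simp [List.map_map]

lemma bridge_finite (l m : ℕ) : (MotzkinBridge l m).Finite := by
  apply (motzkin_finite_aux (l + m + m)).subset
  rintro w ⟨hw, h0, hm, h1⟩
  exact ⟨hw, by rw [motzkin_length hw]; omega⟩

lemma exc_finite (l m : ℕ) : (MotzkinExcursion l m).Finite :=
  (bridge_finite l m).subset fun _ hw => hw.1

lemma up_finite (l m : ℕ) : (MotzkinPathUp l m).Finite := by
  apply (motzkin_finite_aux (l + m + (m + 1))).subset
  rintro w ⟨hw, h0, hm, h1⟩
  exact ⟨hw, by rw [motzkin_length hw]; omega⟩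

lemma decomp_aux {b b' e e' : List ℤ} (hlen : b.length ≤ b'.length)
    (hbs : b.sum = 0) (hbs' : b'.sum = 0) (he : ∀ p, p <+: e → 0 ≤ p.sum)
    (h : b ++ 1 :: e = b' ++ 1 :: e') : b = b' := by
  have hb : b <+: b ++ 1 :: e := ⟨1 :: e, rfl⟩
  have hb' : b' <+: b ++ 1 :: e := h ▸ ⟨1 :: e', rfl⟩
  rcases eq_or_lt_of_le hlen with heq | hlt
  · exact (List.prefix_of_prefix_length_le hb hb' hlen).sublist.eq_of_length heq
  · exfalso
    have hb1 : b ++ [1] <+: b ++ 1 :: e := ⟨e, by simp⟩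
    have hpre : b ++ [1] <+: b' :=
      List.prefix_of_prefix_length_le hb1 hb' (by simpa using hlt)
    obtain ⟨t, ht⟩ := hpre
    have he' : e = t ++ 1 :: e' := by
      have : b ++ 1 :: e = b ++ 1 :: (t ++ 1 :: e') := by
        rw [h, ← ht]; simp
      simpa using this
    have h1 : (0:ℤ) ≤ t.sum := he t ⟨1 :: e', he'.symm⟩
    have h2 : b'.sum = b.sum + 1 + t.sum := by rw [← ht]; simp; ring
    omega

lemma decomp_unique {b b' e e' : List ℤ}
    (hbs : b.sum = 0) (hbs' : b'.sum = 0) (he : ∀ p, p <+: e → 0 ≤ p.sum)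
    (he' : ∀ p, p <+: e' → 0 ≤ p.sum)
    (h : b ++ 1 :: e = b' ++ 1 :: e') : b = b' ∧ e = e' := by
  have hbb : b = b' := by
    rcases le_total b.length b'.length with hl | hl
    · exact decomp_aux hl hbs hbs' he h
    · exact (decomp_aux hl hbs' hbs he' h.symm).symm
  subst hbb
  exact ⟨rfl, by simpa using h⟩

lemma decomp_exists {w : List ℤ} (hw : IsMotzkinWord w) (hsum : w.sum = 1) :
    ∃ b e : List ℤ, b.sum = 0 ∧ e.sum = 0 ∧
      (∀ p, p <+: e → 0 ≤ p.sum) ∧ w = b ++ 1 :: e := by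
  classical
  set k := Nat.findGreatest (fun k => (w.take k).sum = 0) w.length with hkdef
  have hk0 : (w.take k).sum = 0 :=
    Nat.findGreatest_spec (P := fun k => (w.take k).sum = 0) (Nat.zero_le _) (by simp)
  have hkle : k ≤ w.length := Nat.findGreatest_le _
  have hne : ∀ j, k < j → j ≤ w.length → (w.take j).sum ≠ 0 := fun j hj hle =>
    Nat.findGreatest_is_greatest hj hle
  have hstepbound : ∀ j (hj : j < w.length), w[j] ≤ 1 ∧ -1 ≤ w[j] := by
    intro j hj
    rcases hw w[j] (List.getElem_mem hj) with h | h | h <;> omega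
  have H : ∀ d j, w.length ≤ j + d → k < j → j ≤ w.length → 1 ≤ (w.take j).sum := by
    intro d
    induction d with
    | zero =>
      intro j h1 h2 h3
      have : j = w.length := by omega
      subst this
      rw [List.take_length]; omega
    | succ d ih =>
      intro j h1 h2 h3
      rcases eq_or_lt_of_le h3 with heq | hlt
      · subst heq; rw [List.take_length]; omega
      · have hnext := ih (j+1) (by omega) (by omega) (by omega)
        have hsucc : (w.take (j+1)).sum = (w.take j).sum + w[j] :=
          List.sum_take_succ w j hlt
        have hb := hstepbound j hlt
        have := hne j h2 h3
        omega
  have hklt : k < w.length := by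
    rcases eq_or_lt_of_le hkle with heq | hlt
    · exfalso; rw [heq, List.take_length] at hk0; omega
    · exact hlt
  have hk1 : 1 ≤ (w.take (k+1)).sum := H w.length (k+1) (by omega) (by omega) (by omega)
  have hsucc : (w.take (k+1)).sum = (w.take k).sum + w[k] := List.sum_take_succ w k hklt
  have hbd := hstepbound k hklt
  have hwk : w[k] = 1 := by omega
  refine ⟨w.take k, w.drop (k+1), hk0, ?_, ?_, ?_⟩
  · have hweq : w = w.take k ++ 1 :: w.drop (k+1) := by
      conv_lhs => rw [← List.take_append_drop k w]
      rw [List.drop_eq_getElem_cons hklt, hwk]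
    have : w.sum = (w.take k).sum + 1 + (w.drop (k+1)).sum := by
      conv_lhs => rw [hweq]
      simp; ring
    omega
  · intro p hp
    have hweq : w = w.take k ++ 1 :: w.drop (k+1) := by
      conv_lhs => rw [← List.take_append_drop k w]
      rw [List.drop_eq_getElem_cons hklt, hwk]
    obtain ⟨t, ht⟩ := hp
    have hpre : w.take k ++ 1 :: p <+: w :=
      ⟨t, by rw [List.append_assoc, List.cons_append]; conv_rhs => rw [hweq, ← ht]⟩
    have hlenb : (w.take k).length = k := by simp; omega
    have hjlen : (w.take k ++ 1 :: p).length = k + 1 + p.length := by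
      simp [hlenb]; omega
    have htake : w.take (k + 1 + p.length) = w.take k ++ 1 :: p := by
      have := List.prefix_iff_eq_take.mp hpre
      rw [hjlen] at this
      exact this.symm
    have hle2 : k + 1 + p.length ≤ w.length := by
      have := hpre.length_le; omega
    have h1 : 1 ≤ (w.take (k + 1 + p.length)).sum := H w.length _ (by omega) (by omega) hle2
    rw [htake] at h1
    simp [hk0] at h1
    omega
  · conv_lhs => rw [← List.take_append_drop k w]
    rw [List.drop_eq_getElem_cons hklt, hwk]

lemma count_decomp_ne (c : ℤ) (b e : List ℤ) (hc : (1:ℤ) ≠ c) :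
    (b ++ 1 :: e).count c = b.count c + e.count c := by
  simp [List.count_append, List.count_cons, hc]

lemma count_decomp_one (b e : List ℤ) :
    (b ++ 1 :: e).count 1 = b.count 1 + e.count 1 + 1 := by
  simp [List.count_append, List.count_cons]; omega

lemma ncard_finset_biUnion {ι α : Type*} (s : Finset ι) (t : ι → Set α)
    (ht : ∀ i ∈ s, (t i).Finite)
    (hd : (s : Set ι).Pairwise fun i j => Disjoint (t i) (t j)) :
    (⋃ i ∈ s, t i).ncard = ∑ i ∈ s, (t i).ncard := by
  classical
  induction s using Finset.induction_on with
  | empty => simp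
  | @insert a s ha ih =>
    rw [Finset.set_biUnion_insert, Finset.sum_insert ha]
    have hta : (t a).Finite := ht a (Finset.mem_insert_self a s)
    have hts : (⋃ i ∈ s, t i).Finite :=
      Set.Finite.biUnion s.finite_toSet (fun i hi => ht i (Finset.mem_insert_of_mem hi))
    have hdisj : Disjoint (t a) (⋃ i ∈ s, t i) := by
      rw [Set.disjoint_iUnion₂_right]
      intro i hi
      exact hd (Finset.mem_coe.mpr (Finset.mem_insert_self a s))
        (Finset.mem_coe.mpr (Finset.mem_insert_of_mem hi)) (fun h => ha (h ▸ hi))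
    rw [Set.ncard_union_eq hdisj hta hts,
      ih (fun i hi => ht i (Finset.mem_insert_of_mem hi))
        (hd.mono (by simp [Set.insert_subset_insert, Finset.coe_insert]))]

/-- The decomposition map. -/
def motzkinGlue (x : List ℤ × List ℤ) : List ℤ := x.2 ++ 1 :: x.1

/-- The block of paths with prescribed parameters of the two pieces. -/
def motzkinBlock (p q : ℕ × ℕ) : Set (List ℤ) :=
  motzkinGlue '' (MotzkinExcursion p.1 q.1 ×ˢ MotzkinBridge p.2 q.2)

lemma exc_sum {l m : ℕ} {e : List ℤ} (he : e ∈ MotzkinExcursion l m) : e.sum = 0 := by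
  obtain ⟨⟨hw, h0, hm, h1⟩, _⟩ := he
  rw [motzkin_sum hw, h1, hm]; ring

lemma br_sum {l m : ℕ} {b : List ℤ} (hb : b ∈ MotzkinBridge l m) : b.sum = 0 := by
  obtain ⟨hw, h0, hm, h1⟩ := hb
  rw [motzkin_sum hw, h1, hm]; ring

lemma block_subset {l m : ℕ} {p q : ℕ × ℕ} (hp : p ∈ Finset.HasAntidiagonal.antidiagonal l)
    (hq : q ∈ Finset.HasAntidiagonal.antidiagonal m) : motzkinBlock p q ⊆ MotzkinPathUp l m := by
  rintro _ ⟨⟨e, b⟩, ⟨he, hb⟩, rfl⟩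
  obtain ⟨⟨hew, he0, hem, he1⟩, _⟩ := he
  obtain ⟨hbw, hb0, hbm, hb1⟩ := hb
  rw [Finset.HasAntidiagonal.mem_antidiagonal] at hp hq
  refine ⟨?_, ?_, ?_, ?_⟩
  · intro x hx
    simp only [motzkinGlue, List.mem_append, List.mem_cons] at hx
    rcases hx with h | h | h
    · exact hbw x h
    · subst h; right; right; rfl
    · exact hew x h
  · rw [show motzkinGlue (e, b) = b ++ 1 :: e from rfl,
      count_decomp_ne 0 b e (by norm_num), hb0, he0]; omega
  · rw [show motzkinGlue (e, b) = b ++ 1 :: e from rfl,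
      count_decomp_ne (-1) b e (by norm_num), hbm, hem]; omega
  · rw [show motzkinGlue (e, b) = b ++ 1 :: e from rfl,
      count_decomp_one b e, hb1, he1]; omega

lemma block_injOn (p q : ℕ × ℕ) :
    Set.InjOn motzkinGlue (MotzkinExcursion p.1 q.1 ×ˢ MotzkinBridge p.2 q.2) := by
  rintro ⟨e, b⟩ ⟨he, hb⟩ ⟨e', b'⟩ ⟨he', hb'⟩ h
  obtain ⟨hbb, hee⟩ := decomp_unique (br_sum hb) (br_sum hb') he.2 he'.2 h
  exact Prod.ext hee hbb

end Aux

/-- Coefficient form of `B^{(+1)} = E·B`: Motzkin paths from `0` to `+1` decompose as an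
excursion followed by a bridge. -/
theorem pathUp_eq_exc_mul_bridge (l m : ℕ) :
    BrUp l m =
      ∑ p ∈ Finset.HasAntidiagonal.antidiagonal l, ∑ q ∈ Finset.HasAntidiagonal.antidiagonal m,
        Exc p.1 q.1 * Br p.2 q.2 := by
  classical
  have hunion : MotzkinPathUp l m =
      ⋃ r ∈ (Finset.HasAntidiagonal.antidiagonal l ×ˢ Finset.HasAntidiagonal.antidiagonal m), motzkinBlock r.1 r.2 := by
    ext w
    constructor
    · rintro ⟨hw, h0, hm, h1⟩
      obtain ⟨b, e, hbs, hes, hpre, rfl⟩ := decomp_exists hw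
        (by rw [motzkin_sum hw, h1, hm]; push_cast; ring)
      have hbw : IsMotzkinWord b := fun x hx => hw x (by simp [hx])
      have hew : IsMotzkinWord e := fun x hx => hw x (by simp [hx])
      have hbsum := motzkin_sum hbw
      have hesum := motzkin_sum hew
      have hb1m : b.count 1 = b.count (-1) := by omega
      have he1m : e.count 1 = e.count (-1) := by omega
      have hc0 := count_decomp_ne 0 b e (by norm_num)
      have hcm := count_decomp_ne (-1) b e (by norm_num)
      refine Set.mem_iUnion₂.mpr ⟨((e.count 0, b.count 0), (e.count (-1), b.count (-1))),
        Finset.mem_product.mpr ⟨by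
            rw [Finset.HasAntidiagonal.mem_antidiagonal]; show e.count 0 + b.count 0 = l; omega,
          by rw [Finset.HasAntidiagonal.mem_antidiagonal]; show e.count (-1) + b.count (-1) = m; omega⟩,
        ⟨(e, b), ⟨⟨⟨hew, rfl, rfl, he1m⟩, hpre⟩, ⟨hbw, rfl, rfl, hb1m⟩⟩, rfl⟩⟩
    · intro h
      obtain ⟨r, hr, hw⟩ := Set.mem_iUnion₂.mp h
      exact block_subset (Finset.mem_product.mp hr).1 (Finset.mem_product.mp hr).2 hw
  have hblockfin : ∀ (p q : ℕ × ℕ), (motzkinBlock p q).Finite := fun p q =>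
    Set.Finite.image _ ((exc_finite p.1 q.1).prod (bridge_finite p.2 q.2))
  have hdisj : ((Finset.HasAntidiagonal.antidiagonal l ×ˢ Finset.HasAntidiagonal.antidiagonal m : Finset _) : Set (_ × _)).Pairwise
      fun r r' => Disjoint (motzkinBlock r.1 r.2) (motzkinBlock r'.1 r'.2) := by
    rintro ⟨p, q⟩ hr ⟨p', q'⟩ hr' hne
    rw [Set.disjoint_left]
    rintro _ ⟨⟨e, b⟩, ⟨he, hb⟩, rfl⟩ ⟨⟨e', b'⟩, ⟨he', hb'⟩, heq⟩
    replace he : e ∈ MotzkinExcursion p.1 q.1 := he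
    replace hb : b ∈ MotzkinBridge p.2 q.2 := hb
    replace he' : e' ∈ MotzkinExcursion p'.1 q'.1 := he'
    replace hb' : b' ∈ MotzkinBridge p'.2 q'.2 := hb'
    obtain ⟨hbb, hee⟩ := decomp_unique (br_sum hb') (br_sum hb) he'.2 he.2 heq
    apply hne
    obtain ⟨⟨_, he0, hem, _⟩, _⟩ := he
    obtain ⟨⟨_, he0', hem', _⟩, _⟩ := he'
    obtain ⟨_, hb0, hbm, _⟩ := hb
    obtain ⟨_, hb0', hbm', _⟩ := hb'
    subst hbb hee
    simp only [Prod.mk.injEq, Prod.ext_iff]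
    exact ⟨⟨by omega, by omega⟩, ⟨by omega, by omega⟩⟩
  have hcard : ∀ (p q : ℕ × ℕ), (motzkinBlock p q).ncard = Exc p.1 q.1 * Br p.2 q.2 := by
    intro p q
    rw [motzkinBlock, Set.ncard_image_of_injOn (block_injOn p q)]
    rw [← Nat.card_coe_set_eq]
    rw [Nat.card_congr (Equiv.Set.prod _ _), Nat.card_prod]
    rfl
  calc BrUp l m = (MotzkinPathUp l m).ncard := Nat.card_coe_set_eq _
    _ = ∑ r ∈ Finset.HasAntidiagonal.antidiagonal l ×ˢ Finset.HasAntidiagonal.antidiagonal m,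
          (motzkinBlock r.1 r.2).ncard := by
        rw [hunion]
        exact ncard_finset_biUnion _ _ (fun r _ => hblockfin r.1 r.2) hdisj
    _ = ∑ p ∈ Finset.HasAntidiagonal.antidiagonal l, ∑ q ∈ Finset.HasAntidiagonal.antidiagonal m,
          Exc p.1 q.1 * Br p.2 q.2 := by
        rw [Finset.sum_product]
        exact Finset.sum_congr rfl fun p _ => Finset.sum_congr rfl fun q _ => hcard p q
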